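/- Let G be a simple graph on a finite index set ι, let x : ι → ℝ satisfy 0 < x i < 1 for all i, and define μ i = x i / (1 − x i). Then for every i ∈ ι, x i · ∏_{j adjacent to i in G} (1 − x j) ≤ μ i / (∑_{I ⊆ Γ̄(i), I independent in G} ∏_{j ∈ I} μ j), where Γ̄(i) denotes the closed neighborhood of i in G. In other words, the Lovász condition P(A i) ≤ x i · ∏_{j ∼ i} (1 − x j) implies the cluster-expansion condition P(A i) ≤ μ i / ∑_{I ⊆ Γ̄(i) independent} ∏_{j ∈ I} μ j under the substitution μ i = x i / (1 − x i). -/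

import Mathlib

open Finset

/-- The Lovász condition implies the cluster-expansion condition: under the
substitution `μ i = x i / (1 - x i)`, for every vertex `i` we have
`x i * ∏_{j ~ i} (1 - x j) ≤ μ i / ∑_{I ⊆ Γ̄(i), I independent} ∏_{j ∈ I} μ j`. -/
theorem lovasz_le_cluster_expansion
    {ι : Type*} [Fintype ι] [DecidableEq ι]
    (G : SimpleGraph ι) [DecidableRel G.Adj]
    (x : ι → ℝ) (hx0 : ∀ i, 0 < x i) (hx1 : ∀ i, x i < 1)
    (μ : ι → ℝ) (hμ : ∀ i, μ i = x i / (1 - x i)) (i : ι) :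
    x i * ∏ j ∈ G.neighborFinset i, (1 - x j) ≤
      μ i / ∑ I ∈ (insert i (G.neighborFinset i)).powerset.filter
        (fun I => ∀ a ∈ I, ∀ b ∈ I, ¬ G.Adj a b), ∏ j ∈ I, μ j := by
  have h1x : ∀ j, 0 < 1 - x j := fun j => by linarith [hx1 j]
  have hμpos : ∀ j, 0 < μ j := fun j => by
    rw [hμ j]; exact div_pos (hx0 j) (h1x j)
  set s := insert i (G.neighborFinset i) with hs
  set F := s.powerset.filter (fun I => ∀ a ∈ I, ∀ b ∈ I, ¬ G.Adj a b) with hF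
  set S := ∑ I ∈ F, ∏ j ∈ I, μ j with hS
  have hSpos : (0:ℝ) < S := by
    have hmem : (∅ : Finset ι) ∈ F := by
      simp [hF]
    have h1 : (1:ℝ) ≤ S := by
      have := Finset.single_le_sum (f := fun I => ∏ j ∈ I, μ j)
        (fun I _ => Finset.prod_nonneg fun j _ => (hμpos j).le) hmem
      simpa using this
    linarith
  have hT : S ≤ ∏ j ∈ s, (1 + μ j) := by
    have : ∏ j ∈ s, (μ j + 1) = ∑ t ∈ s.powerset, (∏ j ∈ t, μ j) * ∏ j ∈ s \ t, (1:ℝ) := by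
      exact Finset.prod_add (fun j => μ j) (fun _ => (1:ℝ)) s
    have h2 : ∏ j ∈ s, (1 + μ j) = ∑ t ∈ s.powerset, ∏ j ∈ t, μ j := by
      simpa [add_comm] using this
    rw [h2, hS, hF]
    exact Finset.sum_le_sum_of_subset_of_nonneg (Finset.filter_subset _ _)
      (fun t _ _ => Finset.prod_nonneg fun j _ => (hμpos j).le)
  have hinv : ∀ j, 1 + μ j = 1 / (1 - x j) := fun j => by
    rw [hμ j]; field_simp [(h1x j).ne']; ring
  have hini : i ∉ G.neighborFinset i := by simp
  have hprodpos : 0 < ∏ j ∈ s, (1 + μ j) :=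
    Finset.prod_pos fun j _ => by rw [hinv j]; exact one_div_pos.mpr (h1x j)
  have key : x i * ∏ j ∈ G.neighborFinset i, (1 - x j) = μ i / ∏ j ∈ s, (1 + μ j) := by
    have hP : ∏ j ∈ s, (1 + μ j) = ∏ j ∈ s, (1 / (1 - x j)) :=
      Finset.prod_congr rfl fun j _ => hinv j
    rw [hP, hs, Finset.prod_insert hini, hμ i]
    have hne : ∀ j, (1 - x j) ≠ 0 := fun j => (h1x j).ne'
    have hpne : (∏ j ∈ G.neighborFinset i, (1 - x j)) ≠ 0 :=
      Finset.prod_ne_zero_iff.mpr fun j _ => hne j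
    simp only [one_div, Finset.prod_inv_distrib]
    rw [eq_div_iff (mul_ne_zero (inv_ne_zero (hne i)) (inv_ne_zero hpne))]
    field_simp
  rw [key]
  exact div_le_div_of_nonneg_left (hμpos i).le hSpos hT
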